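/- Let X be a finite-dimensional complex analytic manifold, let U be an open subset of X bounded for the Carathéodory pseudodistance, let M = sup_{x∈U, y∈U} c_X(x,y) and k = tanh(M), and assume 0 < k < 1. Then for all x, y ∈ U, c_U(x,y) ≥ tanh⁻¹((1/k) · tanh(c_X(x,y))); equivalently, tanh(c_U(x,y)) ≥ (1/k) · tanh(c_X(x,y)). -/

import Mathlib

open scoped Manifold ENNReal

/-- The inverse hyperbolic tangent (tanh⁻¹), the inverse of `Real.tanh` on `(-1, 1)`. -/
noncomputable def artanh (x : ℝ) : ℝ := Real.log ((1 + x) / (1 - x)) / 2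

/-- The Poincaré distance on the unit disc `Δ ⊂ ℂ`:
`ω(z, w) = tanh⁻¹ |(z - w) / (1 - w̄ z)|`. -/
noncomputable def poincareDist (z w : ℂ) : ℝ :=
  artanh (‖(z - w) / (1 - (starRingEnd ℂ) w * z)‖)

/-- The Carathéodory pseudodistance of a complex manifold `X` modeled on `E`:
`c_X(x, y) = sup { ω(φ x, φ y) : φ : X → Δ holomorphic }` (with values in `[0, ∞]`). -/
noncomputable def caratheodory (E : Type*) [NormedAddCommGroup E] [NormedSpace ℂ E]
    (X : Type*) [TopologicalSpace X] [ChartedSpace E X] (x y : X) : ℝ≥0∞ :=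
  ⨆ φ ∈ {φ : X → ℂ | MDifferentiable 𝓘(ℂ, E) 𝓘(ℂ, ℂ) φ ∧ ∀ z, ‖φ z‖ < 1},
    ENNReal.ofReal (poincareDist (φ x) (φ y))

private lemma tanh_formula (x : ℝ) :
    Real.tanh x = (Real.exp (2*x) - 1) / (Real.exp (2*x) + 1) := by
  have h : Real.exp x ≠ 0 := (Real.exp_pos x).ne'
  rw [Real.tanh_eq_sinh_div_cosh, Real.sinh_eq, Real.cosh_eq,
    show (2:ℝ)*x = x + x by ring, Real.exp_add, Real.exp_neg]
  field_simp

private lemma tanh_strictMono : StrictMono Real.tanh := by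
  intro a b hab
  rw [tanh_formula, tanh_formula]
  have ea := Real.exp_pos (2*a)
  have eb := Real.exp_pos (2*b)
  have hlt : Real.exp (2*a) < Real.exp (2*b) := Real.exp_lt_exp.2 (by linarith)
  rw [div_lt_div_iff₀ (by linarith) (by linarith)]
  nlinarith

private lemma tanh_lt_one (x : ℝ) : Real.tanh x < 1 := by
  rw [tanh_formula]
  have e := Real.exp_pos (2*x)
  rw [div_lt_one (by linarith)]
  linarith

private lemma tanh_nonneg {x : ℝ} (hx : 0 ≤ x) : 0 ≤ Real.tanh x := by
  rw [tanh_formula]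
  have : (1:ℝ) ≤ Real.exp (2*x) := Real.one_le_exp (by linarith)
  have e := Real.exp_pos (2*x)
  apply div_nonneg <;> linarith

private lemma artanh_tanh (s : ℝ) : artanh (Real.tanh s) = s := by
  have e := Real.exp_pos (2*s)
  rw [tanh_formula, artanh]
  have h1 : (1 + (Real.exp (2*s) - 1)/(Real.exp (2*s)+1)) /
      (1 - (Real.exp (2*s) - 1)/(Real.exp (2*s)+1)) = Real.exp (2*s) := by
    field_simp
    ring
  rw [h1, Real.log_exp]; ring

private lemma tanh_artanh {x : ℝ} (h1 : -1 < x) (h2 : x < 1) : Real.tanh (artanh x) = x := by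
  have hx : (0:ℝ) < (1+x)/(1-x) := by
    apply div_pos <;> linarith
  have he : Real.exp (2 * artanh x) = (1+x)/(1-x) := by
    rw [artanh, show 2 * (Real.log ((1+x)/(1-x)) / 2) = Real.log ((1+x)/(1-x)) by ring,
      Real.exp_log hx]
  rw [tanh_formula, he]
  have h1x : (1:ℝ) - x ≠ 0 := by linarith
  field_simp
  ring

private lemma artanh_nonneg {x : ℝ} (h1 : 0 ≤ x) (h2 : x < 1) : 0 ≤ artanh x := by
  have : (1:ℝ) ≤ (1+x)/(1-x) := by
    rw [le_div_iff₀ (by linarith)]; linarith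
  have := Real.log_nonneg this
  rw [artanh]; linarith

private lemma artanh_lt_artanh {a b : ℝ} (ha : -1 < a) (hab : a < b) (hb : b < 1) :
    artanh a < artanh b := by
  have h1 : Real.tanh (artanh a) = a := tanh_artanh ha (lt_trans hab hb)
  have h2 : Real.tanh (artanh b) = b := tanh_artanh (lt_trans ha hab) hb
  rw [← tanh_strictMono.lt_iff_lt, h1, h2]
  exact hab

private lemma artanh_zero : artanh 0 = 0 := by simp [artanh]

private lemma artanh_one : artanh 1 = 0 := by simp [artanh]

private lemma normSq_identity (z w : ℂ) :
    Complex.normSq (1 - (starRingEnd ℂ) w * z) - Complex.normSq (z - w)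
      = (1 - Complex.normSq w) * (1 - Complex.normSq z) := by
  simp [Complex.normSq_apply, Complex.mul_re, Complex.mul_im, Complex.sub_re, Complex.sub_im,
    Complex.one_re, Complex.one_im, Complex.conj_re, Complex.conj_im]
  ring

private lemma den_pos {z w : ℂ} (hz : ‖z‖ < 1) (hw : ‖w‖ < 1) :
    0 < Complex.normSq (1 - (starRingEnd ℂ) w * z) := by
  have hz' : Complex.normSq z < 1 := by
    rw [← Complex.sq_norm]; nlinarith [norm_nonneg z]
  have hw' : Complex.normSq w < 1 := by
    rw [← Complex.sq_norm]; nlinarith [norm_nonneg w]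
  have key := normSq_identity z w
  nlinarith [Complex.normSq_nonneg (z - w)]

private lemma den_ne {z w : ℂ} (hz : ‖z‖ < 1) (hw : ‖w‖ < 1) :
    (1 : ℂ) - (starRingEnd ℂ) w * z ≠ 0 := by
  intro h
  have := den_pos hz hw
  rw [h] at this
  simp at this

private lemma pseudo_lt_one {z w : ℂ} (hz : ‖z‖ < 1) (hw : ‖w‖ < 1) :
    ‖(z - w) / (1 - (starRingEnd ℂ) w * z)‖ < 1 := by
  have hz' : Complex.normSq z < 1 := by
    rw [← Complex.sq_norm]; nlinarith [norm_nonneg z]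
  have hw' : Complex.normSq w < 1 := by
    rw [← Complex.sq_norm]; nlinarith [norm_nonneg w]
  have key := normSq_identity z w
  have hpos := den_pos hz hw
  have hne := den_ne hz hw
  rw [norm_div, div_lt_one (by simpa using hne)]
  rw [Complex.norm_def, Complex.norm_def]
  exact Real.sqrt_lt_sqrt (Complex.normSq_nonneg _) (by nlinarith)

private lemma bound_lemma
    {E : Type*} [NormedAddCommGroup E] [NormedSpace ℂ E] [FiniteDimensional ℂ E]
    {X : Type*} [TopologicalSpace X] [ChartedSpace E X] [IsManifold 𝓘(ℂ, E) (⊤ : WithTop ℕ∞) X]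
    (U : TopologicalSpace.Opens X)
    (M : ℝ≥0∞) (hM : M = ⨆ (x : U) (y : U), caratheodory E X (x : X) (y : X)) (hbdd : M ≠ ⊤)
    (k : ℝ) (hk : k = Real.tanh M.toReal)
    (φ : X → ℂ)
    (hφ : MDifferentiable 𝓘(ℂ, E) 𝓘(ℂ, ℂ) φ ∧ ∀ z, ‖φ z‖ < 1) (z w : U) :
    ‖(φ z - φ w) / (1 - (starRingEnd ℂ) (φ w) * φ z)‖ ≤ k := by
  set ρ := ‖(φ z - φ w) / (1 - (starRingEnd ℂ) (φ w) * φ z)‖ with hρ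
  have hρ1 : ρ < 1 := pseudo_lt_one (hφ.2 _) (hφ.2 _)
  have hρ0 : 0 ≤ ρ := norm_nonneg _
  have hle : ENNReal.ofReal (poincareDist (φ z) (φ w)) ≤ caratheodory E X (z : X) (w : X) := by
    rw [caratheodory]
    exact le_iSup₂ (f := fun φ (_ : φ ∈ {φ : X → ℂ | MDifferentiable 𝓘(ℂ, E) 𝓘(ℂ, ℂ) φ ∧
      ∀ z, ‖φ z‖ < 1}) => ENNReal.ofReal (poincareDist (φ (z : X)) (φ (w : X)))) φ hφ
  have hle2 : caratheodory E X (z : X) (w : X) ≤ M := by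
    rw [hM]
    exact le_iSup₂ (f := fun (x : U) (y : U) => caratheodory E X (x : X) (y : X)) z w
  have hle' : poincareDist (φ z) (φ w) ≤ M.toReal :=
    (ENNReal.ofReal_le_iff_le_toReal hbdd).1 (hle.trans hle2)
  have htanh : Real.tanh (poincareDist (φ z) (φ w)) = ρ := by
    rw [poincareDist, ← hρ, tanh_artanh (lt_of_lt_of_le neg_one_lt_zero hρ0) hρ1]
  rw [← htanh, hk]
  exact tanh_strictMono.monotone hle'

private lemma core_lemma
    {E : Type*} [NormedAddCommGroup E] [NormedSpace ℂ E] [FiniteDimensional ℂ E]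
    {X : Type*} [TopologicalSpace X] [ChartedSpace E X] [IsManifold 𝓘(ℂ, E) (⊤ : WithTop ℕ∞) X]
    (U : TopologicalSpace.Opens X)
    (M : ℝ≥0∞) (hM : M = ⨆ (x : U) (y : U), caratheodory E X (x : X) (y : X)) (hbdd : M ≠ ⊤)
    (k : ℝ) (hk : k = Real.tanh M.toReal) (hk0 : 0 < k) (hk1 : k < 1)
    (x y : U) (r : ℝ) (hr0 : 0 ≤ r)
    (hrt : k * r < Real.tanh (caratheodory E X (x : X) (y : X)).toReal) :
    ENNReal.ofReal (artanh r) ≤ caratheodory E U x y := by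
  set cX := caratheodory E X (x : X) (y : X) with hcX
  have hcXle : cX ≤ M := by
    rw [hM]
    exact le_iSup₂ (f := fun (x : U) (y : U) => caratheodory E X (x : X) (y : X)) x y
  have hcXtop : cX ≠ ⊤ := fun h => hbdd (top_le_iff.mp (h ▸ hcXle))
  rcases eq_or_lt_of_le hr0 with hr0' | hr0'
  · rw [← hr0', artanh_zero]
    simp
  set t := Real.tanh cX.toReal with ht
  have ht0 : 0 < t := lt_of_le_of_lt (by positivity) hrt
  have htk : t ≤ k := by
    rw [ht, hk]
    exact tanh_strictMono.monotone (ENNReal.toReal_mono hbdd hcXle)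
  set K := (k + t / r) / 2 with hK
  have hktr : k < t / r := (lt_div_iff₀ hr0').mpr hrt
  have hkK : k < K := by rw [hK]; linarith
  have hK0 : 0 < K := lt_trans hk0 hkK
  have hKrt : K * r < t := by
    have hdr : t / r * r = t := div_mul_cancel₀ t hr0'.ne'
    have : K * r = (k * r + t) / 2 := by rw [hK]; field_simp
    rw [this]; linarith
  have hKr0 : 0 ≤ K * r := by positivity
  have hKr1 : K * r < 1 := lt_of_lt_of_le (lt_of_lt_of_le hKrt htk) hk1.le
  set c' := artanh (K * r) with hc'
  have hc'0 : 0 ≤ c' := artanh_nonneg hKr0 hKr1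
  have htc' : Real.tanh c' = K * r := tanh_artanh (by linarith) hKr1
  have hc'lt : c' < cX.toReal := by
    by_contra h
    push_neg at h
    have h2 := tanh_strictMono.monotone h
    rw [htc'] at h2
    rw [← ht] at h2
    linarith
  have h2 : ENNReal.ofReal c' < cX := by
    calc ENNReal.ofReal c' < ENNReal.ofReal cX.toReal :=
          (ENNReal.ofReal_lt_ofReal_iff (lt_of_le_of_lt hc'0 hc'lt)).2 hc'lt
      _ = cX := ENNReal.ofReal_toReal hcXtop
  rw [hcX, caratheodory] at h2
  obtain ⟨φ, hφ2⟩ := lt_iSup_iff.mp h2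
  obtain ⟨hφS, hφgt⟩ := lt_iSup_iff.mp hφ2
  simp only [Set.mem_setOf_eq] at hφS
  set p := poincareDist (φ x) (φ y) with hp
  have hc'p : c' < p := (ENNReal.ofReal_lt_ofReal_iff'.1 hφgt).1
  set ρ := ‖(φ x - φ y) / (1 - (starRingEnd ℂ) (φ y) * φ x)‖ with hρdef
  have hρ1 : ρ < 1 := pseudo_lt_one (hφS.2 _) (hφS.2 _)
  have hρ0 : 0 ≤ ρ := norm_nonneg _
  have hρk : ρ ≤ k := bound_lemma U M hM hbdd k hk φ hφS x y
  have htanhp : Real.tanh p = ρ := by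
    rw [hp, poincareDist, ← hρdef, tanh_artanh (lt_of_lt_of_le neg_one_lt_zero hρ0) hρ1]
  have hKrρ : K * r < ρ := by
    have := tanh_strictMono hc'p
    rw [htc', htanhp] at this
    exact this
  have hrρ : r < K⁻¹ * ρ := by
    rw [inv_mul_eq_div, lt_div_iff₀ hK0]
    linarith [hKrρ]
  -- construct ψ
  set a := φ (y : X) with ha
  set ψ : U → ℂ := fun z => ((K : ℂ))⁻¹ * ((φ (z : X) - a) / (1 - (starRingEnd ℂ) a * φ (z : X)))
    with hψ
  have habsψ : ∀ z : U, ‖ψ z‖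
      = K⁻¹ * ‖(φ (z : X) - a) / (1 - (starRingEnd ℂ) a * φ (z : X))‖ := by
    intro z
    rw [hψ]
    simp only [norm_mul, norm_inv]
    norm_num [Complex.norm_real, abs_of_pos hK0]
  have hψlt : ∀ z : U, ‖ψ z‖ < 1 := by
    intro z
    rw [habsψ]
    have hzk : ‖(φ (z : X) - a) / (1 - (starRingEnd ℂ) a * φ (z : X))‖ ≤ k :=
      bound_lemma U M hM hbdd k hk φ hφS z y
    have h3 : K⁻¹ * ‖(φ (z : X) - a) / (1 - (starRingEnd ℂ) a * φ (z : X))‖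
        ≤ K⁻¹ * k := mul_le_mul_of_nonneg_left hzk (inv_nonneg.2 hK0.le)
    have h4 : K⁻¹ * k < K⁻¹ * K := mul_lt_mul_of_pos_left hkK (inv_pos.2 hK0)
    rw [inv_mul_cancel₀ hK0.ne'] at h4
    linarith
  have hψdiff : MDifferentiable 𝓘(ℂ, E) 𝓘(ℂ, ℂ) ψ := by
    rw [hψ]
    intro z
    have hφU : MDifferentiableAt 𝓘(ℂ, E) 𝓘(ℂ, ℂ) (fun z : U => φ (z : X)) z :=
      MDifferentiableAt.comp z (hφS.1 (z : X))
        (((contMDiff_subtype_val (n := 1)).mdifferentiable one_ne_zero) z)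
    have hden : (1 : ℂ) - (starRingEnd ℂ) a * φ (z : X) ≠ 0 :=
      den_ne (hφS.2 (z : X)) (hφS.2 (y : X))
    have hg : DifferentiableAt ℂ
        (fun w : ℂ => ((K : ℂ))⁻¹ * ((w - a) / (1 - (starRingEnd ℂ) a * w))) (φ (z : X)) := by
      apply DifferentiableAt.const_mul
      exact (differentiableAt_id.sub (differentiableAt_const a)).div
        ((differentiableAt_const 1).sub ((differentiableAt_const _).mul differentiableAt_id))
        hden
    have hg' : MDifferentiableAt 𝓘(ℂ, ℂ) 𝓘(ℂ, ℂ)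
        (fun w : ℂ => ((K : ℂ))⁻¹ * ((w - a) / (1 - (starRingEnd ℂ) a * w))) (φ (z : X)) :=
      hg.mdifferentiableAt
    exact MDifferentiableAt.comp
      (g := fun w : ℂ => ((K : ℂ))⁻¹ * ((w - a) / (1 - (starRingEnd ℂ) a * w)))
      (f := fun z : U => φ (z : X)) z hg' hφU
  have hψmem : ψ ∈ {φ : U → ℂ | MDifferentiable 𝓘(ℂ, E) 𝓘(ℂ, ℂ) φ ∧
      ∀ z, ‖φ z‖ < 1} := ⟨hψdiff, hψlt⟩
  have hle : ENNReal.ofReal (poincareDist (ψ x) (ψ y)) ≤ caratheodory E U x y := by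
    rw [caratheodory]
    exact le_iSup₂ (f := fun φ (_ : φ ∈ {φ : U → ℂ | MDifferentiable 𝓘(ℂ, E) 𝓘(ℂ, ℂ) φ ∧
      ∀ z, ‖φ z‖ < 1}) => ENNReal.ofReal (poincareDist (φ x) (φ y))) ψ hψmem
  have hψy : ψ y = 0 := by
    rw [hψ]
    simp [ha]
  have hpd : poincareDist (ψ x) (ψ y) = artanh (‖ψ x‖) := by
    rw [hψy, poincareDist]
    simp
  have hψxρ : ‖ψ x‖ = K⁻¹ * ρ := habsψ x
  have hKρ1 : K⁻¹ * ρ < 1 := by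
    have h4 : K⁻¹ * ρ ≤ K⁻¹ * k := mul_le_mul_of_nonneg_left hρk (inv_nonneg.2 hK0.le)
    have h5 : K⁻¹ * k < K⁻¹ * K := mul_lt_mul_of_pos_left hkK (inv_pos.2 hK0)
    rw [inv_mul_cancel₀ hK0.ne'] at h5
    linarith
  have hfinal : artanh r < artanh (‖ψ x‖) := by
    rw [hψxρ]
    exact artanh_lt_artanh (by linarith) hrρ hKρ1
  calc ENNReal.ofReal (artanh r) ≤ ENNReal.ofReal (poincareDist (ψ x) (ψ y)) := by
        rw [hpd]; exact ENNReal.ofReal_le_ofReal hfinal.le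
    _ ≤ caratheodory E U x y := hle

/-- Let `X` be a finite-dimensional complex analytic manifold, `U ⊆ X` an open subset bounded
for the Carathéodory pseudodistance, `M = sup_{x,y ∈ U} c_X(x,y)`, `k = tanh M`, with
`0 < k < 1`. Then for all `x, y ∈ U`, `c_U(x,y) ≥ tanh⁻¹ ((1/k) · tanh (c_X(x,y)))`;
equivalently `tanh (c_U(x,y)) ≥ (1/k) · tanh (c_X(x,y))` (the latter stated when `c_U(x,y)`
is finite, it being trivial otherwise since `tanh` tends to `1` at `∞`). -/
theorem caratheodory_opens_ge_artanh
    {E : Type*} [NormedAddCommGroup E] [NormedSpace ℂ E] [FiniteDimensional ℂ E]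
    {X : Type*} [TopologicalSpace X] [ChartedSpace E X] [IsManifold 𝓘(ℂ, E) (⊤ : WithTop ℕ∞) X]
    (U : TopologicalSpace.Opens X)
    (M : ℝ≥0∞) (hM : M = ⨆ (x : U) (y : U), caratheodory E X (x : X) (y : X)) (hbdd : M ≠ ⊤)
    (k : ℝ) (hk : k = Real.tanh M.toReal) (hk0 : 0 < k) (hk1 : k < 1) :
    ∀ x y : U,
      ENNReal.ofReal (artanh ((1 / k) * Real.tanh (caratheodory E X (x : X) (y : X)).toReal)) ≤
        caratheodory E U x y ∧
      (caratheodory E U x y ≠ ⊤ →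
        (1 / k) * Real.tanh (caratheodory E X (x : X) (y : X)).toReal ≤
          Real.tanh (caratheodory E U x y).toReal) := by
  intro x y
  set cX := caratheodory E X (x : X) (y : X) with hcX
  set cU := caratheodory E U x y with hcU
  have hcXle : cX ≤ M := by
    rw [hM]
    exact le_iSup₂ (f := fun (x : U) (y : U) => caratheodory E X (x : X) (y : X)) x y
  have hcXtop : cX ≠ ⊤ := fun h => hbdd (top_le_iff.mp (h ▸ hcXle))
  set t := Real.tanh cX.toReal with ht
  have ht0 : 0 ≤ t := tanh_nonneg ENNReal.toReal_nonneg
  have htk : t ≤ k := by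
    rw [ht, hk]
    exact tanh_strictMono.monotone (ENNReal.toReal_mono hbdd hcXle)
  have htk1 : (1 / k) * t ≤ 1 := by
    rw [div_mul_eq_mul_div, one_mul, div_le_one hk0]
    exact htk
  have htk0 : 0 ≤ (1 / k) * t := by positivity
  have hpart1 : ENNReal.ofReal (artanh ((1 / k) * t)) ≤ cU := by
    by_contra hcon
    push_neg at hcon
    have hUtop : cU ≠ ⊤ := hcon.ne_top
    have hlt : cU.toReal < artanh ((1 / k) * t) :=
      (ENNReal.lt_ofReal_iff_toReal_lt hUtop).1 hcon
    rcases lt_or_ge ((1 / k) * t) 1 with h1 | h1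
    · set s := (cU.toReal + artanh ((1 / k) * t)) / 2 with hs
      have hs1 : cU.toReal < s := by rw [hs]; linarith
      have hs2 : s < artanh ((1 / k) * t) := by rw [hs]; linarith
      have hs0 : 0 ≤ s := le_trans ENNReal.toReal_nonneg hs1.le
      have hr0 : 0 ≤ Real.tanh s := tanh_nonneg hs0
      have hrlt : Real.tanh s < (1 / k) * t := by
        have h2 := tanh_strictMono hs2
        rwa [tanh_artanh (by linarith) h1] at h2
      have hkr : k * Real.tanh s < t := by
        have h3 := mul_lt_mul_of_pos_left hrlt hk0
        have h4 : k * ((1 / k) * t) = t := by field_simp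
        rwa [h4] at h3
      have hcore := core_lemma U M hM hbdd k hk hk0 hk1 x y (Real.tanh s) hr0 hkr
      rw [artanh_tanh] at hcore
      have h5 := (ENNReal.ofReal_le_iff_le_toReal hUtop).1 hcore
      linarith
    · have h2 : (1 / k) * t = 1 := le_antisymm htk1 h1
      rw [h2, artanh_one] at hlt
      exact absurd hlt (not_lt.2 ENNReal.toReal_nonneg)
  refine ⟨hpart1, fun hUtop => ?_⟩
  rcases lt_or_eq_of_le htk with htk' | htk'
  · have h1 : (1 / k) * t < 1 := by
      rw [div_mul_eq_mul_div, one_mul, div_lt_one hk0]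
      exact htk'
    have h2 : artanh ((1 / k) * t) ≤ cU.toReal :=
      (ENNReal.ofReal_le_iff_le_toReal hUtop).1 hpart1
    have h3 := tanh_strictMono.monotone h2
    rwa [tanh_artanh (by linarith) h1] at h3
  · exfalso
    have hall : ∀ s : ℝ, 0 ≤ s → ENNReal.ofReal s ≤ cU := by
      intro s hs
      have hks : k * Real.tanh s < t := by
        rw [← htk']
        nlinarith [tanh_lt_one s, tanh_nonneg hs]
      have hr := core_lemma U M hM hbdd k hk hk0 hk1 x y (Real.tanh s) (tanh_nonneg hs) hks
      rwa [artanh_tanh] at hr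
    have h4 := hall (cU.toReal + 1) (by positivity)
    have h5 := (ENNReal.ofReal_le_iff_le_toReal hUtop).1 h4
    linarith
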